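/- Let σ be a finite positive Borel measure on ℝ with support contained in [α,β] whose support is an infinite set, let z_0, …, z_n ∈ ℂ with Im z_k > 0, and let P be a polynomial with real coefficients of degree exactly n+1 such that ∫ t^j P(t)/∏_{k=0}^{n}|t − z_k|² dσ(t) = 0 for all j = 0, 1, …, n. Then P has n+1 distinct real zeros, all of which lie in the interval [α,β]. -/

import Mathlib

open MeasureTheory

/-- The (topological) support of a Borel measure on `ℝ`: the set of points all
of whose neighbourhoods have positive measure. -/
def measSupport (μ : Measure ℝ) : Set ℝ :=
  {x : ℝ | ∀ U ∈ nhds x, 0 < μ U}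

open Polynomial in
/-- The polynomials orthogonal with respect to the varying weights
`dσ(t)/∏|t - z_k|²` have all their zeros simple, real, and located in `[α, β]`. -/
theorem stmt9 (α β : ℝ) (hαβ : α ≤ β) (σ : Measure ℝ) [IsFiniteMeasure σ]
    (hsupp : measSupport σ ⊆ Set.Icc α β) (hinf : (measSupport σ).Infinite)
    (n : ℕ) (z : Fin (n + 1) → ℂ) (hz : ∀ k, 0 < (z k).im)
    (P : Polynomial ℝ) (hdeg : P.degree = (n + 1 : ℕ))
    (horth : ∀ j : ℕ, j ≤ n →
      (∫ t, t ^ j * P.eval t /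
        ∏ k : Fin (n + 1), Complex.normSq ((t : ℂ) - z k) ∂σ) = 0) :
    ∃ s : Finset ℝ, s.card = n + 1 ∧ ∀ x ∈ s, x ∈ Set.Icc α β ∧ P.eval x = 0 := by
  classical
  set w : ℝ → ℝ := fun t => ∏ k : Fin (n + 1), Complex.normSq ((t : ℂ) - z k) with hw
  have hwpos : ∀ t, 0 < w t := by
    intro t
    apply Finset.prod_pos
    intro k _
    apply Complex.normSq_pos.mpr
    intro h
    have him := congrArg Complex.im h
    simp at him
    exact (hz k).ne' him
  have hwcont : Continuous w := by
    apply continuous_finset_prod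
    intro k _
    exact Complex.continuous_normSq.comp (Complex.continuous_ofReal.sub continuous_const)
  have hnd : P.natDegree = n + 1 := Polynomial.natDegree_eq_of_degree_eq_some hdeg
  have hP0 : P ≠ 0 := fun h => by rw [h, Polynomial.natDegree_zero] at hnd; omega
  -- the measure is carried by its support
  have hnull : σ (measSupport σ)ᶜ = 0 := by
    apply measure_null_of_locally_null
    intro x hx
    simp only [measSupport, Set.mem_compl_iff, Set.mem_setOf_eq, not_forall] at hx
    obtain ⟨U, hU, hU0⟩ := hx
    exact ⟨U, mem_nhdsWithin_of_mem_nhds hU, le_antisymm (not_lt.mp hU0) zero_le⟩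
  have hIccnull : σ (Set.Icc α β)ᶜ = 0 :=
    measure_mono_null (Set.compl_subset_compl.mpr hsupp) hnull
  have haemem : ∀ᵐ t ∂σ, t ∈ Set.Icc α β := by
    rw [ae_iff]
    exact hIccnull
  -- integrability of all relevant functions
  have hint : ∀ R : Polynomial ℝ, Integrable (fun t => R.eval t / w t) σ := by
    intro R
    rw [← Measure.restrict_eq_self_of_ae_mem haemem]
    exact ContinuousOn.integrableOn_compact isCompact_Icc
      ((R.continuous_aeval.div hwcont fun t => (hwpos t).ne').continuousOn)
  -- extended orthogonality
  have horth' : ∀ Q : Polynomial ℝ, Q.natDegree ≤ n →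
      ∫ t, (Q * P).eval t / w t ∂σ = 0 := by
    intro Q hQ
    have hkey : (fun t => (Q * P).eval t / w t) =
        fun t => ∑ j ∈ Finset.range (n + 1),
          Q.coeff j * (((X : ℝ[X]) ^ j * P).eval t / w t) := by
      funext t
      rw [Polynomial.eval_mul, Polynomial.eval_eq_sum_range' (Nat.lt_succ_of_le hQ) t,
        Finset.sum_mul, Finset.sum_div]
      apply Finset.sum_congr rfl
      intro j _
      simp [mul_div_assoc, mul_assoc]
    rw [hkey, integral_finset_sum]
    · apply Finset.sum_eq_zero
      intro j hj
      rw [integral_const_mul]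
      have := horth j (Nat.lt_succ_iff.mp (Finset.mem_range.mp hj))
      have h2 : ∫ t, ((X : ℝ[X]) ^ j * P).eval t / w t ∂σ = 0 := by
        simpa [hw] using this
      rw [h2, mul_zero]
    · intro j _
      exact (hint _).const_mul _
  -- the set of roots of P in [α, β]
  set T : Finset ℝ := P.roots.toFinset.filter (fun x => x ∈ Set.Icc α β) with hT
  have hTmem : ∀ x, x ∈ T ↔ P.eval x = 0 ∧ x ∈ Set.Icc α β := by
    intro x
    simp [hT, Multiset.mem_toFinset, Polynomial.mem_roots, hP0, Polynomial.IsRoot]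
  have hTcard : n + 1 ≤ T.card := by
    by_contra hcon
    push_neg at hcon
    have hTn : T.card ≤ n := Nat.lt_succ_iff.mp hcon
    set m : ℝ → ℕ := fun x => P.rootMultiplicity x with hm
    set A : ℝ[X] := ∏ x ∈ T, (X - C x) ^ m x with hA
    set Q : ℝ[X] := ∏ x ∈ T, (X - C x) ^ (m x % 2) with hQ
    set B : ℝ[X] := ∏ x ∈ T, (X - C x) ^ ((m x + 1) / 2) with hB
    have hcop : (T : Set ℝ).Pairwise (Function.onFun IsCoprime fun x => (X - C x) ^ m x) := by
      intro x _ y _ hxy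
      exact (Polynomial.pairwise_coprime_X_sub_C Function.injective_id hxy).pow
    have hAdvd : A ∣ P :=
      Finset.prod_dvd_of_coprime hcop fun x _ => P.pow_rootMultiplicity_dvd x
    obtain ⟨U, hPU⟩ := hAdvd
    have hU0 : U ≠ 0 := by
      rintro rfl
      simp at hPU
      exact hP0 hPU
    have hUne : ∀ x ∈ Set.Icc α β, U.eval x ≠ 0 := by
      intro x hx hUx
      have hxroot : P.eval x = 0 := by
        rw [hPU, Polynomial.eval_mul, hUx, mul_zero]
      have hxT : x ∈ T := (hTmem x).mpr ⟨hxroot, hx⟩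
      have h1 : (X - C x) ^ m x ∣ A := Finset.dvd_prod_of_mem _ hxT
      have h2 : (X - C x) ∣ U := Polynomial.dvd_iff_isRoot.mpr hUx
      have h3 : (X - C x) ^ (m x + 1) ∣ P := by
        rw [hPU, pow_succ]
        exact mul_dvd_mul h1 h2
      have h4 := (Polynomial.le_rootMultiplicity_iff hP0).mpr h3
      simp only [hm] at h4
      omega
    -- constant sign of U on [α, β]
    have hUsign : (∀ x ∈ Set.Icc α β, 0 < U.eval x) ∨ (∀ x ∈ Set.Icc α β, U.eval x < 0) := by
      by_contra hc
      push_neg at hc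
      obtain ⟨⟨a, ha, ha'⟩, ⟨b, hb, hb'⟩⟩ := hc
      have ha2 : U.eval a < 0 := lt_of_le_of_ne ha' (hUne a ha)
      have hb2 : 0 < U.eval b := lt_of_le_of_ne' hb' (hUne b hb)
      have h0 : (0 : ℝ) ∈ Set.uIcc (U.eval a) (U.eval b) :=
        Set.mem_uIcc.mpr (Or.inl ⟨ha2.le, hb2.le⟩)
      have hsub : Set.uIcc a b ⊆ Set.Icc α β := Set.ordConnected_Icc.uIcc_subset ha hb
      obtain ⟨c, hc1, hc2⟩ :=
        intermediate_value_uIcc (U.continuous_aeval.continuousOn) h0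
      exact hUne c (hsub hc1) hc2
    -- the key pointwise identity
    have key : ∀ t, (Q * P).eval t = (B.eval t) ^ 2 * U.eval t := by
      intro t
      have hAQ : A.eval t * Q.eval t = (B.eval t) ^ 2 := by
        simp only [hA, hQ, hB, Polynomial.eval_prod, Polynomial.eval_pow,
          Polynomial.eval_sub, Polynomial.eval_X, Polynomial.eval_C]
        rw [← Finset.prod_mul_distrib, ← Finset.prod_pow]
        apply Finset.prod_congr rfl
        intro x _
        rw [← pow_add, ← pow_mul]
        congr 1
        omega
      rw [Polynomial.eval_mul, hPU, Polynomial.eval_mul, ← hAQ]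
      ring
    -- degree of Q
    have hQdeg : Q.natDegree ≤ n := by
      have h1 : Q.natDegree = ∑ x ∈ T, (m x % 2) := by
        rw [hQ, Polynomial.natDegree_prod]
        · apply Finset.sum_congr rfl
          intro x _
          rw [Polynomial.natDegree_pow, Polynomial.natDegree_X_sub_C, mul_one]
        · intro x _
          exact pow_ne_zero _ (Polynomial.X_sub_C_ne_zero x)
      have h2 : ∑ x ∈ T, (m x % 2) ≤ ∑ x ∈ T, 1 :=
        Finset.sum_le_sum fun x _ => Nat.le_of_lt_succ (Nat.mod_lt _ (by norm_num))
      simp only [Finset.sum_const, smul_eq_mul, mul_one] at h2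
      omega
    have hIz := horth' Q hQdeg
    -- deduce B.eval = 0 a.e.
    have hBae : ∀ᵐ t ∂σ, B.eval t = 0 := by
      have hmain : ∀ᵐ t ∂σ, (Q * P).eval t / w t = 0 := by
        rcases hUsign with hpos | hneg
        · have hnn : 0 ≤ᵐ[σ] fun t => (Q * P).eval t / w t := by
            filter_upwards [haemem] with t ht
            rw [key t]
            exact div_nonneg (mul_nonneg (sq_nonneg _) (hpos t ht).le) (hwpos t).le
          exact (integral_eq_zero_iff_of_nonneg_ae hnn (hint (Q * P))).mp hIz
        · have hnn : 0 ≤ᵐ[σ] fun t => -((Q * P).eval t / w t) := by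
            filter_upwards [haemem] with t ht
            rw [key t]
            have : (B.eval t) ^ 2 * U.eval t ≤ 0 :=
              mul_nonpos_of_nonneg_of_nonpos (sq_nonneg _) (hneg t ht).le
            exact neg_nonneg.mpr (div_nonpos_of_nonpos_of_nonneg this (hwpos t).le)
          have hIz' : ∫ t, -((Q * P).eval t / w t) ∂σ = 0 := by
            rw [integral_neg, hIz, neg_zero]
          have := (integral_eq_zero_iff_of_nonneg_ae hnn (hint (Q * P)).neg).mp hIz'
          filter_upwards [this] with t ht
          exact neg_eq_zero.mp ht
      filter_upwards [hmain, haemem] with t ht1 ht2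
      rw [key t] at ht1
      have h3 : (B.eval t) ^ 2 * U.eval t = 0 :=
        (div_eq_zero_iff.mp ht1).resolve_right (hwpos t).ne'
      have h4 : (B.eval t) ^ 2 = 0 :=
        (mul_eq_zero.mp h3).resolve_right (hUne t ht2)
      exact pow_eq_zero_iff (by norm_num) |>.mp h4
    -- contradiction with the infinite support
    have hB0 : B ≠ 0 := by
      rw [hB]
      exact Finset.prod_ne_zero_iff.mpr
        fun x _ => pow_ne_zero _ (Polynomial.X_sub_C_ne_zero x)
    have hfin : {x : ℝ | B.IsRoot x}.Finite := Polynomial.finite_setOf_isRoot hB0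
    obtain ⟨x, hxsupp, hxB⟩ : ∃ x ∈ measSupport σ, B.eval x ≠ 0 := by
      by_contra h
      push_neg at h
      exact hinf (hfin.subset fun x hx => h x hx)
    have hopen : IsOpen {t : ℝ | B.eval t ≠ 0} := by
      have : {t : ℝ | B.eval t ≠ 0} = {x : ℝ | B.IsRoot x}ᶜ := by
        ext t; simp [Polynomial.IsRoot]
      rw [this]
      exact hfin.isClosed.isOpen_compl
    have hpos := hxsupp _ (hopen.mem_nhds hxB)
    have hzero : σ {t : ℝ | B.eval t ≠ 0} = 0 := by
      rw [ae_iff] at hBae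
      exact hBae
    rw [hzero] at hpos
    exact lt_irrefl _ hpos
  obtain ⟨s, hsT, hscard⟩ := Finset.exists_subset_card_eq hTcard
  refine ⟨s, hscard, fun x hx => ?_⟩
  have := (hTmem x).mp (hsT hx)
  exact ⟨this.2, this.1⟩
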